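/- Let K be a field, E a directed graph, v an infinite emitter in E, and S_{v∞} the left L_K(E)-module whose underlying K-vector space has basis the set of finite paths p with r(p) = v, with the module action given by P_u, S_e, S_{e*} (where S_{e*}·v = 0 for every edge e). Then S_{v∞} is a simple left L_K(E)-module. -/

import Mathlib

open scoped Classical

variable {V E : Type*}

/-- The source of a path ending at `v`, represented as a list of edges
(the empty list is the trivial path at `v`). -/
def psrc (s : E → V) (v : V) : List E → V
  | [] => v
  | e :: _ => s e

/-- `l` is a path in the graph `(V, E, s, r)` with range `v`: consecutive edges are
composable and the last edge has range `v`. -/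
def IsPathTo (s r : E → V) (v : V) (l : List E) : Prop :=
  l.Chain' (fun e f => r e = s f) ∧ ∀ e ∈ l.getLast?, r e = v

/-- The set `B` of paths `p` with `r(p) = v` (including the trivial path `v`). -/
def PathTo (s r : E → V) (v : V) : Type _ := {l : List E // IsPathTo s r v l}

theorem IsPathTo.cons {s r : E → V} {v : V} {e : E} {l : List E}
    (hl : IsPathTo s r v l) (h : r e = psrc s v l) : IsPathTo s r v (e :: l) := by
  obtain ⟨h1, h2⟩ := hl
  refine ⟨?_, ?_⟩
  · cases l with
    | nil => exact List.isChain_singleton _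
    | cons f t => exact List.isChain_cons_cons.mpr ⟨h, h1⟩
  · cases l with
    | nil =>
      intro x hx
      simp only [List.getLast?_singleton, Option.mem_some_iff] at hx
      subst hx; exact h
    | cons f t =>
      intro x hx
      rw [List.getLast?_cons_cons] at hx
      exact h2 x hx

variable (s r : E → V) (v : V) (K : Type*) [Field K]

/-- The operator `P_u` on the vector space with basis the paths ending at `v`. -/
noncomputable def Pop (u : V) : (PathTo s r v →₀ K) →ₗ[K] (PathTo s r v →₀ K) :=
  Finsupp.lsum K fun p => if psrc s v p.1 = u then Finsupp.lsingle p else 0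

/-- The operator `S_e`: prepends the edge `e` when composable, else `0`. -/
noncomputable def Sop (e : E) : (PathTo s r v →₀ K) →ₗ[K] (PathTo s r v →₀ K) :=
  Finsupp.lsum K fun p =>
    if h : r e = psrc s v p.1 then Finsupp.lsingle (⟨e :: p.1, p.2.cons h⟩ : PathTo s r v)
    else 0

/-- The operator `S_{e*}`: removes a leading edge `e` when present, else `0`
(in particular `S_{e*}(v) = 0`). -/
noncomputable def Stop (e : E) : (PathTo s r v →₀ K) →ₗ[K] (PathTo s r v →₀ K) :=
  Finsupp.lsum K fun p =>
    if h : ∃ q : PathTo s r v, p.1 = e :: q.1 then Finsupp.lsingle h.choose else 0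

attribute [reducible] PathTo

theorem isPathTo_nil : IsPathTo s r v [] := ⟨List.isChain_nil, by simp⟩

theorem pathTo_ext_iff {p q : PathTo s r v} : p = q ↔ p.1 = q.1 := Subtype.ext_iff

/-- The trivial path at `v`. -/
def nilp : PathTo s r v := ⟨[], isPathTo_nil s r v⟩

theorem isPathTo_tail {e : E} {t : List E} (h : IsPathTo s r v (e :: t)) :
    IsPathTo s r v t := by
  obtain ⟨h1, h2⟩ := h
  cases t with
  | nil => exact isPathTo_nil s r v
  | cons f u =>
    rw [List.Chain', List.isChain_cons_cons] at h1
    exact ⟨h1.2, fun x hx => h2 x (by rw [List.getLast?_cons_cons]; exact hx)⟩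

theorem isPathTo_head {e : E} {t : List E} (h : IsPathTo s r v (e :: t)) :
    r e = psrc s v t := by
  obtain ⟨h1, h2⟩ := h
  cases t with
  | nil => exact h2 e (by simp)
  | cons f u => rw [List.Chain', List.isChain_cons_cons] at h1; exact h1.1

theorem Pop_single (u : V) (p : PathTo s r v) (k : K) :
    Pop s r v K u (Finsupp.single p k) =
      if psrc s v p.1 = u then Finsupp.single p k else 0 := by
  rw [Pop, Finsupp.lsum_single]
  split_ifs <;> simp

theorem Sop_single (e : E) (p : PathTo s r v) (k : K) :
    Sop s r v K e (Finsupp.single p k) =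
      if h : r e = psrc s v p.1 then
        Finsupp.single (⟨e :: p.1, p.2.cons h⟩ : PathTo s r v) k
      else 0 := by
  rw [Sop, Finsupp.lsum_single]
  split_ifs <;> simp

theorem Stop_single_of_ne (e : E) (p : PathTo s r v) (k : K)
    (h : ∀ t, p.1 ≠ e :: t) :
    Stop s r v K e (Finsupp.single p k) = 0 := by
  rw [Stop, Finsupp.lsum_single, dif_neg, LinearMap.zero_apply]
  rintro ⟨q, hq⟩
  exact h q.1 hq

theorem Stop_single_cons (e : E) (t : List E) (h : IsPathTo s r v (e :: t))
    (ht : IsPathTo s r v t) (k : K) :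
    Stop s r v K e (Finsupp.single ⟨e :: t, h⟩ k) = Finsupp.single ⟨t, ht⟩ k := by
  have hex : ∃ q : PathTo s r v, (⟨e :: t, h⟩ : PathTo s r v).1 = e :: q.1 :=
    ⟨⟨t, ht⟩, rfl⟩
  have h3 : e :: t = e :: (hex.choose).1 := hex.choose_spec
  have h4 : (hex.choose).1 = t := by injection h3 with _ h4; exact h4.symm
  rw [Stop, Finsupp.lsum_single, dif_pos hex, Finsupp.lsingle_apply]
  congr 1
  exact Subtype.ext h4

theorem Stop_apply (e : E) (t : List E) (ht : IsPathTo s r v t)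
    (h : IsPathTo s r v (e :: t)) (x : PathTo s r v →₀ K) :
    Stop s r v K e x ⟨t, ht⟩ = x ⟨e :: t, h⟩ := by
  induction x using Finsupp.induction with
  | zero => simp
  | single_add p k f _ _ ih =>
    rw [map_add, Finsupp.add_apply, Finsupp.add_apply, ih]
    congr 1
    obtain ⟨l, hl⟩ := p
    cases l with
    | nil =>
      rw [Stop_single_of_ne s r v K e _ k (by simp)]
      rw [Finsupp.single_eq_of_ne (by simp [pathTo_ext_iff s r v])]
      simp
    | cons f u =>
      by_cases hfe : f = e
      · subst hfe
        rw [Stop_single_cons s r v K f u hl (isPathTo_tail s r v hl) k]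
        simp only [Finsupp.single_apply, pathTo_ext_iff s r v, List.cons.injEq, true_and]
      · rw [Stop_single_of_ne s r v K e _ k
          (by intro t' h'; injection h' with h1 _; exact hfe h1)]
        rw [Finsupp.single_eq_of_ne (by simp [pathTo_ext_iff s r v, Ne.symm hfe])]
        simp

theorem key_term (F : Finset E) (hF : ∀ f ∈ F, s f = v)
    (p : PathTo s r v) (k : K)
    (hmem : ∀ e t, p.1 = e :: t → s e = v → e ∈ F) :
    Pop s r v K v (Finsupp.single p k) -
      ∑ f ∈ F, Sop s r v K f (Stop s r v K f (Finsupp.single p k)) =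
    if p = nilp s r v then Finsupp.single p k else 0 := by
  obtain ⟨l, hl⟩ := p
  cases l with
  | nil =>
    rw [if_pos (show (⟨[], hl⟩ : PathTo s r v) = nilp s r v from rfl), Pop_single,
      if_pos (show psrc s v (⟨[], hl⟩ : PathTo s r v).1 = v from rfl)]
    have hz : ∀ f ∈ F,
        Sop s r v K f (Stop s r v K f (Finsupp.single (⟨[], hl⟩ : PathTo s r v) k)) = 0 := by
      intro f _
      rw [Stop_single_of_ne s r v K f _ k (by simp), map_zero]
    rw [Finset.sum_congr rfl hz, Finset.sum_const_zero, sub_zero]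
  | cons e t =>
    rw [if_neg (by simp [nilp, pathTo_ext_iff s r v])]
    by_cases hs : s e = v
    · have heF : e ∈ F := hmem e t rfl hs
      rw [Pop_single, if_pos (show psrc s v (⟨e :: t, hl⟩ : PathTo s r v).1 = v from hs)]
      rw [Finset.sum_eq_single_of_mem e heF (fun f _ hfe => by
        rw [Stop_single_of_ne s r v K f _ k
          (by intro t' h'; injection h' with h1 _; exact hfe h1.symm)]
        simp)]
      rw [Stop_single_cons s r v K e t hl (isPathTo_tail s r v hl) k,
        Sop_single, dif_pos (isPathTo_head s r v hl)]
      exact sub_eq_zero_of_eq rfl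
    · rw [Pop_single, if_neg (show ¬psrc s v (⟨e :: t, hl⟩ : PathTo s r v).1 = v from hs)]
      have hz : ∀ f ∈ F,
          Sop s r v K f (Stop s r v K f (Finsupp.single (⟨e :: t, hl⟩ : PathTo s r v) k)) = 0 := by
        intro f hf
        rw [Stop_single_of_ne s r v K f _ k
          (by intro t' h'; injection h' with h1 _; exact hs (h1 ▸ hF f hf)), map_zero]
      rw [Finset.sum_congr rfl hz, Finset.sum_const_zero]
      simp

theorem key (y : PathTo s r v →₀ K) (F : Finset E)
    (hF : ∀ f ∈ F, s f = v)
    (hmem : ∀ p ∈ y.support, ∀ e t, (p : PathTo s r v).1 = e :: t → s e = v → e ∈ F) :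
    Pop s r v K v y - ∑ f ∈ F, Sop s r v K f (Stop s r v K f y) =
      Finsupp.single (nilp s r v) (y (nilp s r v)) := by
  have hy : y = ∑ p ∈ y.support, Finsupp.single p (y p) := (Finsupp.sum_single y).symm
  conv_lhs => rw [hy]
  simp only [map_sum]
  rw [Finset.sum_comm, ← Finset.sum_sub_distrib]
  rw [Finset.sum_congr rfl
    (fun p hp => key_term s r v K F hF p (y p) (fun e t het => hmem p hp e t het))]
  rw [Finset.sum_ite_eq' y.support (nilp s r v) (fun p => Finsupp.single p (y p))]
  split_ifs with h
  · rfl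
  · rw [Finsupp.notMem_support_iff.mp h, Finsupp.single_zero]

theorem single_mem (U : Submodule K (PathTo s r v →₀ K))
    (hS : ∀ e : E, ∀ x ∈ U, Sop s r v K e x ∈ U)
    (h1 : Finsupp.single (nilp s r v) (1 : K) ∈ U) :
    ∀ (l : List E) (hl : IsPathTo s r v l) (k : K),
      Finsupp.single (⟨l, hl⟩ : PathTo s r v) k ∈ U := by
  intro l
  induction l with
  | nil =>
    intro hl k
    have := U.smul_mem k h1
    rwa [Finsupp.smul_single, smul_eq_mul, mul_one] at this
  | cons e t ih =>
    intro hl k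
    have ht := isPathTo_tail s r v hl
    have := hS e _ (ih ht k)
    rwa [Sop_single, dif_pos (isPathTo_head s r v hl)] at this


/-- For an infinite emitter `v`, the module `S_{v∞}` (the vector space with basis the
paths ending at `v`, with the `L_K(E)`-action induced by the operators `P_u`, `S_e`,
`S_{e*}`) is a simple left `L_K(E)`-module: it is nonzero, and its only subspaces
invariant under all the operators (i.e. its only `L_K(E)`-submodules) are `0` and
the whole space. -/
theorem path_space_module_is_simple (hv : {e : E | s e = v}.Infinite) :
    (⊥ : Submodule K (PathTo s r v →₀ K)) ≠ ⊤ ∧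
    ∀ U : Submodule K (PathTo s r v →₀ K),
      (∀ u : V, ∀ x ∈ U, Pop s r v K u x ∈ U) →
      (∀ e : E, ∀ x ∈ U, Sop s r v K e x ∈ U) →
      (∀ e : E, ∀ x ∈ U, Stop s r v K e x ∈ U) →
      U = ⊥ ∨ U = ⊤ := by
  constructor
  · intro h
    have h1 : Finsupp.single (nilp s r v) (1 : K) ∈ (⊥ : Submodule K (PathTo s r v →₀ K)) := by
      rw [h]; trivial
    rw [Submodule.mem_bot] at h1
    exact one_ne_zero (Finsupp.single_eq_zero.mp h1)
  · intro U hP hSo hSt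
    by_cases hU : U = ⊥
    · exact Or.inl hU
    right
    obtain ⟨x, hxU, hx0⟩ := Submodule.ne_bot_iff U |>.mp hU
    obtain ⟨p, hp⟩ := Finsupp.support_nonempty_iff.mpr hx0
    have hp : x p ≠ 0 := Finsupp.mem_support_iff.mp hp
    -- Step A: produce an element of U with nonzero coefficient at the trivial path.
    have stepA : ∀ (l : List E) (hl : IsPathTo s r v l) (x : PathTo s r v →₀ K),
        x ∈ U → x ⟨l, hl⟩ ≠ 0 → ∃ y ∈ U, y (nilp s r v) ≠ 0 := by
      intro l
      induction l with
      | nil => intro hl x hxU hp; exact ⟨x, hxU, hp⟩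
      | cons e t ih =>
        intro hl x hxU hp
        refine ih (isPathTo_tail s r v hl) (Stop s r v K e x) (hSt e x hxU) ?_
        rw [Stop_apply s r v K e t (isPathTo_tail s r v hl) hl x]
        exact hp
    obtain ⟨y, hyU, hy0⟩ := stepA p.1 p.2 x hxU hp
    -- Step B: the trivial path basis vector lies in U.
    set F : Finset E :=
      (y.support.biUnion fun q => q.1.head?.toFinset).filter (fun f => s f = v) with hFdef
    have hF : ∀ f ∈ F, s f = v := fun f hf => (Finset.mem_filter.mp hf).2
    have hmem : ∀ q ∈ y.support, ∀ e t, (q : PathTo s r v).1 = e :: t → s e = v → e ∈ F := by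
      intro q hq e t het hse
      refine Finset.mem_filter.mpr ⟨Finset.mem_biUnion.mpr ⟨q, hq, ?_⟩, hse⟩
      rw [het]
      simp
    have hkey := key s r v K y F hF hmem
    have hmemU : Finsupp.single (nilp s r v) (y (nilp s r v)) ∈ U := by
      rw [← hkey]
      exact U.sub_mem (hP v y hyU)
        (Submodule.sum_mem U fun f _ => hSo f _ (hSt f y hyU))
    have h1 : Finsupp.single (nilp s r v) (1 : K) ∈ U := by
      have := U.smul_mem (y (nilp s r v))⁻¹ hmemU
      rwa [Finsupp.smul_single, smul_eq_mul, inv_mul_cancel₀ hy0] at this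
    -- Step C: U is everything.
    rw [Submodule.eq_top_iff']
    intro z
    induction z using Finsupp.induction with
    | zero => exact U.zero_mem
    | single_add q k f _ _ ih =>
      exact U.add_mem (single_mem s r v K U hSo h1 q.1 q.2 k) ih
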